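/- For every finite simple graph G with m edges, there exists a set X of vertices with |X| ≤ m/5 such that G − X has no K₄ minor; that is, s(G) ≤ m/5. -/

import Mathlib

open SimpleGraph

/-- `G` has a `K₄` minor (branch-set formulation: four nonempty, pairwise disjoint,
connected branch sets with an edge between every two of them). -/
def HasK4Minor {V : Type*} (G : SimpleGraph V) : Prop :=
  ∃ B : Fin 4 → Set V,
    (∀ i, (B i).Nonempty) ∧
    (∀ i, (G.induce (B i)).Connected) ∧
    (∀ i j, i ≠ j → Disjoint (B i) (B j)) ∧
    (∀ i j, i ≠ j → ∃ u ∈ B i, ∃ v ∈ B j, G.Adj u v)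

/-- `X` is a transversal of `G`: the graph `G − X` has no `K₄` minor. -/
def IsTransversal {V : Type*} (G : SimpleGraph V) (X : Finset V) : Prop :=
  ¬ HasK4Minor (G.induce ((↑X : Set V)ᶜ))

/-- `s(G)`: the minimum size of a transversal of `G`. -/
noncomputable def transNum {V : Type*} (G : SimpleGraph V) : ℕ :=
  sInf {n : ℕ | ∃ X : Finset V, X.card = n ∧ IsTransversal G X}

/-! ### Auxiliary machinery

The proof strategy: we prove `s(G) ≤ Φ(G)` where `Φ(G) = ∑_v f(deg v)` with
`f(d) = 0` for `d ≤ 2` and `f(d) = 1 − 3/(d+1)` for `d ≥ 3`, by induction on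
the degree sum: vertices of degree 1 are deleted, degree-2 vertices are
suppressed (their two neighbors joined by an edge), and otherwise a maximum
degree vertex is deleted into the transversal (Φ drops by at least 1).
Finally `f(d) ≤ d/10` gives `Φ(G) ≤ m/5`. -/

section Aux

variable {V : Type*}

/-- The potential of a single vertex of degree `d`. -/
noncomputable def fpot (d : ℕ) : ℝ := if d ≤ 2 then 0 else 1 - 3 / ((d : ℝ) + 1)

lemma fpot_zero_of_le {d : ℕ} (h : d ≤ 2) : fpot d = 0 := if_pos h

lemma fpot_of_ge {d : ℕ} (h : 3 ≤ d) : fpot d = 1 - 3 / ((d : ℝ) + 1) := if_neg (by omega)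

lemma fpot_nonneg (d : ℕ) : 0 ≤ fpot d := by
  unfold fpot
  split
  · exact le_refl 0
  · rename_i h
    have hd : (3:ℝ) ≤ (d:ℝ) := by exact_mod_cast by omega
    have h1 : (0:ℝ) < (d:ℝ) + 1 := by linarith
    have : 3 / ((d:ℝ) + 1) ≤ 1 := by
      rw [div_le_one h1]; linarith
    linarith

lemma fpot_mono : Monotone fpot := by
  intro d e h
  by_cases hd : d ≤ 2
  · rw [fpot_zero_of_le hd]; exact fpot_nonneg e
  · have hd3 : 3 ≤ d := by omega
    have he3 : 3 ≤ e := by omega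
    rw [fpot_of_ge hd3, fpot_of_ge he3]
    have h1 : (0:ℝ) < (d:ℝ) + 1 := by positivity
    have h2 : (0:ℝ) < (e:ℝ) + 1 := by positivity
    have : 3 / ((e:ℝ) + 1) ≤ 3 / ((d:ℝ) + 1) := by
      apply div_le_div_of_nonneg_left (by norm_num) h1
      exact_mod_cast by omega
    linarith

lemma fpot_drop {d D : ℕ} (hd : 3 ≤ d) (hD : d ≤ D) :
    3 / ((D:ℝ) * ((D:ℝ) + 1)) ≤ fpot d - fpot (d - 1) := by
  have hD3 : 3 ≤ D := le_trans hd hD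
  have hDpos : (0:ℝ) < (D:ℝ) := by exact_mod_cast by omega
  have hD1pos : (0:ℝ) < (D:ℝ) + 1 := by linarith
  have hdd : (3:ℝ) ≤ (d:ℝ) := by exact_mod_cast hd
  have hdD : (d:ℝ) ≤ (D:ℝ) := by exact_mod_cast hD
  rcases Nat.eq_or_lt_of_le hd with h3 | h4
  · -- d = 3
    subst h3
    rw [fpot_of_ge (le_refl 3)]
    have : fpot (3 - 1) = 0 := fpot_zero_of_le (by norm_num)
    rw [this]
    have h12 : (12:ℝ) ≤ (D:ℝ) * ((D:ℝ) + 1) := by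
      nlinarith [show (3:ℝ) ≤ (D:ℝ) from by exact_mod_cast hD3]
    have : 3 / ((D:ℝ) * ((D:ℝ)+1)) ≤ 3 / 12 := by
      apply div_le_div_of_nonneg_left (by norm_num) (by norm_num) h12
    push_cast
    norm_num
    linarith
  · -- d ≥ 4
    have hd4 : 4 ≤ d := h4
    rw [fpot_of_ge hd, fpot_of_ge (by omega : 3 ≤ d - 1)]
    have hcast : ((d - 1 : ℕ) : ℝ) = (d:ℝ) - 1 := by
      have : 1 ≤ d := by omega
      push_cast [this]; ring
    rw [hcast]
    have hdpos : (0:ℝ) < (d:ℝ) := by positivity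
    have h4d : (4:ℝ) ≤ (d:ℝ) := by exact_mod_cast hd4
    have e1 : (1 - 3/((d:ℝ)+1)) - (1 - 3/((d:ℝ)-1+1)) = 3/((d:ℝ)*((d:ℝ)+1)) := by
      rw [sub_add_cancel]
      field_simp
      ring
    rw [e1]
    apply div_le_div_of_nonneg_left (by norm_num) (by positivity)
    nlinarith

lemma fpot_le (d : ℕ) : fpot d ≤ (d : ℝ) / 10 := by
  by_cases hd : d ≤ 2
  · rw [fpot_zero_of_le hd]; positivity
  · have hd3 : 3 ≤ d := by omega
    rw [fpot_of_ge hd3]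
    have h45 : (0:ℝ) ≤ ((d:ℝ) - 4) * ((d:ℝ) - 5) := by
      rcases le_or_gt d 4 with h | h
      · have h4 : (d:ℝ) ≤ 4 := by exact_mod_cast h
        have h5 : (d:ℝ) - 5 ≤ 0 := by linarith
        nlinarith
      · have : (5:ℝ) ≤ (d:ℝ) := by exact_mod_cast h
        apply mul_nonneg <;> linarith
    have h1 : (0:ℝ) < (d:ℝ) + 1 := by positivity
    have h3d : (3:ℝ) ≤ (d:ℝ) := by exact_mod_cast hd3
    have key : 3/((d:ℝ)+1) ≥ 1 - (d:ℝ)/10 := by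
      rw [ge_iff_le, ← sub_nonneg]
      have : 3/((d:ℝ)+1) - (1 - (d:ℝ)/10)
          = ((d:ℝ)*((d:ℝ)+1) - 10*((d:ℝ)+1) + 30) / (10*((d:ℝ)+1)) := by
        field_simp; ring
      rw [this]
      apply div_nonneg _ (by positivity)
      nlinarith
    linarith

/-- Walk surgery: delete `v` from a connected branch set, patching paths through `v`
using edges supplied by `hab`. -/
lemma connected_del (H H' : SimpleGraph V) (B : Set V) (v : V)
    (hc : (H.induce B).Connected)
    (hTrans : ∀ x y, H.Adj x y → x ≠ v → y ≠ v → H'.Adj x y)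
    (hab : ∀ x y, H.Adj v x → H.Adj v y → x ≠ y → H'.Adj x y)
    (hne : (B \ {v}).Nonempty) :
    (H'.induce (B \ {v})).Connected := by
  classical
  -- strengthened walk surgery
  have key : ∀ (x y : ↥B) (w : (H.induce B).Walk x y), ∀ (hy : (y:V) ∈ B \ {v}),
      ((hx : (x:V) ∈ B \ {v}) → (H'.induce (B \ {v})).Reachable ⟨x, hx⟩ ⟨y, hy⟩) ∧
      ((x:V) = v → ∃ u : ↥(B \ {v}), H.Adj v u ∧ (H'.induce (B \ {v})).Reachable u ⟨y, hy⟩) := by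
    intro x y w
    induction w with
    | nil =>
      intro hy
      refine ⟨fun hx => ?_, fun hxv => absurd (hxv ▸ hy.2) (by simp)⟩
      · exact Reachable.refl _
    | @cons x z y h p ih =>
      intro hy
      have hadj : H.Adj (x:V) (z:V) := h
      by_cases hz : (z : V) = v
      · -- passing through v
        have hxv : (x : V) ≠ v := fun hxx => (hadj.ne (hxx.trans hz.symm))
        have hvx : H.Adj v (x:V) := by rw [← hz]; exact hadj.symm
        obtain ⟨u, huadj, hureach⟩ := (ih hy).2 hz
        refine ⟨fun hx => ?_, fun h' => absurd h' hxv⟩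
        by_cases hxu : (x : V) = (u : V)
        · have : (⟨(x:V), hx⟩ : ↥(B\{v})) = u := Subtype.ext hxu
          rw [this]; exact hureach
        · have hadj' : H'.Adj (x:V) (u:V) := hab _ _ hvx huadj hxu
          exact Reachable.trans ⟨Walk.cons (by exact hadj') Walk.nil⟩ hureach
      · -- z ≠ v
        have hzmem : (z:V) ∈ B \ {v} := ⟨z.2, by simpa using hz⟩
        have hr := (ih hy).1 hzmem
        constructor
        · intro hx
          have hxv : (x:V) ≠ v := by simpa using hx.2
          have : H'.Adj (x:V) (z:V) := hTrans _ _ hadj hxv hz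
          exact Reachable.trans ⟨Walk.cons (by exact this) Walk.nil⟩ hr
        · intro hxv
          exact ⟨⟨z, hzmem⟩, by simpa [← hxv] using hadj, hr⟩
  rw [connected_iff]
  refine ⟨?_, ⟨⟨hne.choose, hne.choose_spec⟩⟩⟩
  rintro ⟨x, hx⟩ ⟨y, hy⟩
  obtain ⟨w⟩ := hc.preconnected ⟨x, hx.1⟩ ⟨y, hy.1⟩
  exact (key _ _ w hy).1 hx

/-- From a connected branch set containing `v` and another point, extract a neighbor of `v`
inside the set. -/
lemma exists_nbr (H : SimpleGraph V) (B : Set V) (v : V)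
    (hc : (H.induce B).Connected) (hv : v ∈ B) (hne : (B \ {v}).Nonempty) :
    ∃ c, c ∈ B ∧ c ≠ v ∧ H.Adj v c := by
  obtain ⟨u, huB, huv⟩ := hne
  have huv' : u ≠ v := by simpa using huv
  obtain ⟨w⟩ := hc.preconnected ⟨v, hv⟩ ⟨u, huB⟩
  cases w with
  | nil => exact absurd rfl huv'.symm
  | @cons _ z _ h p =>
    have hadj : H.Adj v (z:V) := h
    exact ⟨z, z.2, fun hzz => hadj.ne' hzz, hadj⟩

/-- Transfer of K₄-minors when deleting/suppressing a vertex `v` of degree at most 2. -/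
lemma transfer (H H' : SimpleGraph V) (v a b : V)
    (hnb : ∀ w, H.Adj v w → w = a ∨ w = b)
    (hTrans : ∀ x y, H.Adj x y → x ≠ v → y ≠ v → H'.Adj x y)
    (hab : ∀ x y, H.Adj v x → H.Adj v y → x ≠ y → H'.Adj x y) :
    HasK4Minor H → HasK4Minor H' := by
  rintro ⟨B, hne, hconn, hdis, hcross⟩
  -- every deleted branch set is still nonempty
  have hne' : ∀ i, (B i \ {v}).Nonempty := by
    intro i
    rw [Set.nonempty_iff_ne_empty]
    intro hemp
    have hsub : B i ⊆ {v} := by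
      intro x hx
      by_contra hxv
      exact absurd (Set.mem_diff_singleton.2 ⟨hx, by simpa using hxv⟩) (by rw [hemp]; simp)
    have hvB : v ∈ B i := by
      obtain ⟨x, hx⟩ := hne i
      have := hsub hx; simp at this; rwa [this] at hx
    -- three cross neighbors of v, all distinct, all in {a,b}
    have getw : ∀ j, j ≠ i → ∃ w, w ∈ B j ∧ H.Adj v w := by
      intro j hj
      obtain ⟨u, hu, w, hw, hadj⟩ := hcross i j (fun hh => hj hh.symm)
      have : u = v := by have := hsub hu; simpa using this
      exact ⟨w, hw, this ▸ hadj⟩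
    obtain ⟨w1, hw1, ha1⟩ := getw (i+1) (by fin_cases i <;> decide)
    obtain ⟨w2, hw2, ha2⟩ := getw (i+2) (by fin_cases i <;> decide)
    obtain ⟨w3, hw3, ha3⟩ := getw (i+3) (by fin_cases i <;> decide)
    have d12 : w1 ≠ w2 := fun he =>
      Set.disjoint_left.mp (hdis _ _ (by fin_cases i <;> decide)) hw1 (he ▸ hw2)
    have d13 : w1 ≠ w3 := fun he =>
      Set.disjoint_left.mp (hdis _ _ (by fin_cases i <;> decide)) hw1 (he ▸ hw3)
    have d23 : w2 ≠ w3 := fun he =>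
      Set.disjoint_left.mp (hdis _ _ (by fin_cases i <;> decide)) hw2 (he ▸ hw3)
    rcases hnb w1 ha1 with rfl | rfl <;> rcases hnb w2 ha2 with h2 | h2 <;>
      rcases hnb w3 ha3 with h3 | h3 <;> simp_all
  refine ⟨fun i => B i \ {v}, hne', ?_, ?_, ?_⟩
  · intro i
    exact connected_del H H' (B i) v (hconn i) hTrans hab (hne' i)
  · intro i j hij
    exact (hdis i j hij).mono Set.diff_subset Set.diff_subset
  · intro i j hij
    obtain ⟨u, hu, w, hw, hadj⟩ := hcross i j hij
    by_cases huv : u = v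
    · subst huv
      obtain ⟨c, hcB, hcv, hcadj⟩ := exists_nbr H (B i) u (hconn i) hu (hne' i)
      have hwv : w ≠ u := hadj.ne'
      have hcw : c ≠ w := fun he => Set.disjoint_left.mp (hdis i j hij) hcB (he ▸ hw)
      exact ⟨c, ⟨hcB, by simpa using hcv⟩, w, ⟨hw, by simpa using hwv⟩,
        hab _ _ hcadj hadj hcw⟩
    · by_cases hwv : w = v
      · subst hwv
        obtain ⟨c, hcB, hcv, hcadj⟩ := exists_nbr H (B j) w (hconn j) hw (hne' j)
        have hcu : u ≠ c := fun he => Set.disjoint_left.mp (hdis i j hij) hu (he ▸ hcB)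
        exact ⟨u, ⟨hu, by simpa using huv⟩, c, ⟨hcB, by simpa using hcv⟩,
          (hab _ _ hcadj hadj.symm hcu.symm).symm⟩
      · exact ⟨u, ⟨hu, by simpa using huv⟩, w, ⟨hw, by simpa using hwv⟩,
          hTrans _ _ hadj huv hwv⟩

/-- Delete all edges incident to `s`. -/
def Del (s : Set V) (G : SimpleGraph V) : SimpleGraph V where
  Adj x y := G.Adj x y ∧ x ∉ s ∧ y ∉ s
  symm := by constructor; rintro x y ⟨h, hx, hy⟩; exact ⟨h.symm, hy, hx⟩
  loopless := by constructor; rintro x ⟨h, -, -⟩; exact G.loopless.irrefl x h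

/-- Suppress the degree-2 vertex `v` with neighbors `a b`: delete `v`'s edges and add `ab`. -/
def Suppress (G : SimpleGraph V) (v a b : V) : SimpleGraph V where
  Adj x y := (G.Adj x y ∧ x ≠ v ∧ y ≠ v) ∨ (((x = a ∧ y = b) ∨ (x = b ∧ y = a)) ∧ a ≠ b)
  symm := by
    constructor
    rintro x y (⟨h, hx, hy⟩ | ⟨(⟨rfl, rfl⟩ | ⟨rfl, rfl⟩), h⟩)
    · exact Or.inl ⟨h.symm, hy, hx⟩
    · exact Or.inr ⟨Or.inr ⟨rfl, rfl⟩, h⟩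
    · exact Or.inr ⟨Or.inl ⟨rfl, rfl⟩, h⟩
  loopless := by
    constructor
    rintro x (⟨h, -, -⟩ | ⟨(⟨rfl, rfl⟩ | ⟨rfl, rfl⟩), h⟩)
    · exact G.loopless.irrefl x h
    · exact h rfl
    · exact h rfl

noncomputable def mydeg (G : SimpleGraph V) (w : V) : ℕ := (G.neighborSet w).ncard

lemma del_nbr_subset (s : Set V) (G : SimpleGraph V) (w : V) :
    (Del s G).neighborSet w ⊆ G.neighborSet w := fun _ hy => hy.1

lemma del_deg_le [Fintype V] (s : Set V) (G : SimpleGraph V) (w : V) :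
    mydeg (Del s G) w ≤ mydeg G w :=
  Set.ncard_le_ncard (del_nbr_subset s G w) (Set.toFinite _)

lemma del_deg_mem [Fintype V] (s : Set V) (G : SimpleGraph V) (w : V) (hw : w ∈ s) :
    mydeg (Del s G) w = 0 := by
  have : (Del s G).neighborSet w = ∅ := by
    ext y; simp only [mem_neighborSet, Set.mem_empty_iff_false, iff_false]
    rintro ⟨-, hx, -⟩; exact hx hw
  rw [mydeg, this, Set.ncard_empty]

lemma del_nbr_eq (v : V) (G : SimpleGraph V) (w : V) (hw : w ≠ v) :
    (Del {v} G).neighborSet w = G.neighborSet w \ {v} := by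
  ext y
  simp only [mem_neighborSet, Del, Set.mem_diff, Set.mem_singleton_iff]
  constructor
  · rintro ⟨h, -, hy⟩; exact ⟨h, hy⟩
  · rintro ⟨h, hy⟩; exact ⟨h, hw, hy⟩

lemma del_deg_nbr [Fintype V] (v : V) (G : SimpleGraph V) (w : V) (hadj : G.Adj v w) :
    mydeg (Del {v} G) w = mydeg G w - 1 := by
  simp only [mydeg]
  rw [del_nbr_eq v G w (fun h => G.loopless.irrefl v (h ▸ hadj))]
  have hv : v ∈ G.neighborSet w := hadj.symm
  rw [Set.ncard_diff_singleton_of_mem hv]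

lemma ncard_aux [Fintype V] {s : Set V} {v c : V} (hv : v ∈ s) :
    ((s \ {v}) ∪ {c}).ncard ≤ s.ncard := by
  calc ((s \ {v}) ∪ {c}).ncard ≤ (s \ {v}).ncard + ({c} : Set V).ncard :=
        Set.ncard_union_le _ _
    _ = (s.ncard - 1) + 1 := by
        rw [Set.ncard_singleton, Set.ncard_diff_singleton_of_mem hv]
    _ ≤ s.ncard := by
        have : 1 ≤ s.ncard := by
          exact (Set.ncard_pos (Set.toFinite _)).2 ⟨v, hv⟩
        omega

section SupDeg
variable [Fintype V] {G : SimpleGraph V} {v a b : V}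

omit [Fintype V] in
lemma sup_deg_v (hva : G.Adj v a) (hvb : G.Adj v b) :
    mydeg (Suppress G v a b) v = 0 := by
  have : (Suppress G v a b).neighborSet v = ∅ := by
    ext y
    simp only [mem_neighborSet, Suppress, Set.mem_empty_iff_false, iff_false]
    rintro (⟨-, hx, -⟩ | ⟨(⟨h1, -⟩ | ⟨h1, -⟩), -⟩)
    · exact hx rfl
    · exact hva.ne h1
    · exact hvb.ne h1
  simp only [mydeg, this, Set.ncard_empty]

lemma sup_deg_le (hva : G.Adj v a) (hvb : G.Adj v b) (w : V) :
    mydeg (Suppress G v a b) w ≤ mydeg G w := by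
  by_cases hw : w = v
  · rw [hw, sup_deg_v hva hvb]; exact Nat.zero_le _
  by_cases hwa : w = a
  · have hsub : (Suppress G v a b).neighborSet w ⊆ (G.neighborSet w \ {v}) ∪ {b} := by
      subst hwa
      rintro y (⟨h, -, hy⟩ | ⟨(⟨-, rfl⟩ | ⟨h1, -⟩), hne⟩)
      · exact Or.inl ⟨h, hy⟩
      · exact Or.inr rfl
      · exact absurd h1.symm (fun hh => hne hh.symm)
    have hv : v ∈ G.neighborSet w := by subst hwa; exact hva.symm
    exact le_trans (Set.ncard_le_ncard hsub (Set.toFinite _)) (ncard_aux hv)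
  by_cases hwb : w = b
  · have hsub : (Suppress G v a b).neighborSet w ⊆ (G.neighborSet w \ {v}) ∪ {a} := by
      subst hwb
      rintro y (⟨h, -, hy⟩ | ⟨(⟨h1, -⟩ | ⟨-, rfl⟩), hne⟩)
      · exact Or.inl ⟨h, hy⟩
      · exact absurd h1 (fun hh => hne hh.symm)
      · exact Or.inr rfl
    have hv : v ∈ G.neighborSet w := by subst hwb; exact hvb.symm
    exact le_trans (Set.ncard_le_ncard hsub (Set.toFinite _)) (ncard_aux hv)
  · have hsub : (Suppress G v a b).neighborSet w ⊆ G.neighborSet w := by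
      rintro y (⟨h, -, -⟩ | ⟨(⟨h1, -⟩ | ⟨h1, -⟩), -⟩)
      · exact h
      · exact absurd h1 hwa
      · exact absurd h1 hwb
    exact Set.ncard_le_ncard hsub (Set.toFinite _)

end SupDeg

section Sums
variable [Fintype V]

noncomputable def degsum (G : SimpleGraph V) : ℕ := ∑ w, mydeg G w
noncomputable def Phi (G : SimpleGraph V) : ℝ := ∑ w, fpot (mydeg G w)

lemma Phi_nonneg (G : SimpleGraph V) : 0 ≤ Phi G :=
  Finset.sum_nonneg fun _ _ => fpot_nonneg _

lemma Phi_mono {G G' : SimpleGraph V} (h : ∀ w, mydeg G' w ≤ mydeg G w) : Phi G' ≤ Phi G :=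
  Finset.sum_le_sum fun w _ => fpot_mono (h w)

lemma degsum_lt {G G' : SimpleGraph V} (h : ∀ w, mydeg G' w ≤ mydeg G w) (v : V)
    (hv : mydeg G' v < mydeg G v) : degsum G' < degsum G :=
  Finset.sum_lt_sum (fun w _ => h w) ⟨v, Finset.mem_univ v, hv⟩

lemma Phi_drop {G : SimpleGraph V} {v : V} (hv3 : 3 ≤ mydeg G v)
    (hmax : ∀ w, mydeg G w ≤ mydeg G v)
    (hnb3 : ∀ w, G.Adj v w → 3 ≤ mydeg G w) :
    Phi (Del {v} G) + 1 ≤ Phi G := by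
  classical
  set D := mydeg G v with hD
  set G' := Del ({v} : Set V) G with hG'
  have hfin : (G.neighborSet v).Finite := Set.toFinite _
  set NF : Finset V := hfin.toFinset with hNF
  have hcard : NF.card = D := by
    rw [hNF, ← Set.ncard_eq_toFinset_card _ hfin]; rfl
  have hDpos : (0:ℝ) < (D:ℝ) := by exact_mod_cast lt_of_lt_of_le (by norm_num) hv3
  have hD1pos : (0:ℝ) < (D:ℝ) + 1 := by linarith
  -- pointwise gap
  set g : V → ℝ := fun w => fpot (mydeg G w) - fpot (mydeg G' w) with hg
  have hgnonneg : ∀ w, 0 ≤ g w := fun w =>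
    sub_nonneg.2 (fpot_mono (del_deg_le _ _ _))
  have hsum : Phi G - Phi G' = ∑ w, g w := by
    rw [Phi, Phi, ← Finset.sum_sub_distrib]
  have hvNF : v ∉ NF := by
    rw [hNF, Set.Finite.mem_toFinset]
    exact fun h => G.loopless.irrefl v h
  have hsub : insert v NF ⊆ Finset.univ := fun x _ => Finset.mem_univ x
  have h1 : ∑ w ∈ insert v NF, g w ≤ ∑ w, g w :=
    Finset.sum_le_sum_of_subset_of_nonneg hsub (fun w _ _ => hgnonneg w)
  have h2 : ∑ w ∈ insert v NF, g w = g v + ∑ w ∈ NF, g w := Finset.sum_insert hvNF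
  have hgv : g v = fpot D := by
    rw [hg]
    simp only
    rw [del_deg_mem _ _ _ (Set.mem_singleton v),
      show fpot 0 = 0 from fpot_zero_of_le (by norm_num), ← hD, sub_zero]
  have hgw : ∀ w ∈ NF, 3 / ((D:ℝ) * ((D:ℝ) + 1)) ≤ g w := by
    intro w hw
    rw [hNF, Set.Finite.mem_toFinset] at hw
    have hadj : G.Adj v w := hw
    have h3w : 3 ≤ mydeg G w := hnb3 w hadj
    have hdel : mydeg G' w = mydeg G w - 1 := del_deg_nbr v G w hadj
    rw [hg]; simp only
    rw [hdel]
    exact fpot_drop h3w (hmax w)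
  have h3 : (D:ℝ) * (3 / ((D:ℝ) * ((D:ℝ) + 1))) ≤ ∑ w ∈ NF, g w := by
    calc (D:ℝ) * (3 / ((D:ℝ) * ((D:ℝ) + 1)))
        = NF.card • (3 / ((D:ℝ) * ((D:ℝ) + 1))) := by rw [hcard, nsmul_eq_mul]
      _ ≤ ∑ w ∈ NF, g w := Finset.card_nsmul_le_sum NF g _ hgw
  have hfD : fpot D = 1 - 3 / ((D:ℝ) + 1) := fpot_of_ge hv3
  have halg : (D:ℝ) * (3 / ((D:ℝ) * ((D:ℝ) + 1))) = 3 / ((D:ℝ) + 1) := by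
    field_simp
  have : (1:ℝ) ≤ Phi G - Phi G' := by
    rw [hsum]
    calc (1:ℝ) = fpot D + 3 / ((D:ℝ) + 1) := by rw [hfD]; ring
      _ ≤ g v + ∑ w ∈ NF, g w := by rw [hgv]; rw [← halg]; exact add_le_add_right h3 _
      _ = ∑ w ∈ insert v NF, g w := h2.symm
      _ ≤ ∑ w, g w := h1
  linarith
end Sums

lemma k4_mono {H H' : SimpleGraph V} (h : H ≤ H') : HasK4Minor H → HasK4Minor H' := by
  rintro ⟨B, hne, hconn, hdis, hcross⟩
  refine ⟨B, hne, fun i => (hconn i).mono ?_, hdis, fun i j hij => ?_⟩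
  · intro x y hxy
    exact h hxy
  · obtain ⟨u, hu, w, hw, hadj⟩ := hcross i j hij
    exact ⟨u, hu, w, hw, h hadj⟩

lemma k4_no_edges {H : SimpleGraph V} (h : ∀ x y, ¬ H.Adj x y) : ¬ HasK4Minor H := by
  rintro ⟨B, -, -, -, hcross⟩
  obtain ⟨u, -, w, -, hadj⟩ := hcross 0 1 (by decide)
  exact h u w hadj

lemma main {V : Type*} [Fintype V] :
    ∀ (n : ℕ) (G : SimpleGraph V), degsum G ≤ n →
      ∃ X : Finset V, (X.card : ℝ) ≤ Phi G ∧ ¬ HasK4Minor (Del (↑X) G) := by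
  classical
  have hnoedge : ∀ (G : SimpleGraph V), (∀ x y, ¬ G.Adj x y) →
      ∃ X : Finset V, (X.card : ℝ) ≤ Phi G ∧ ¬ HasK4Minor (Del (↑X) G) := by
    intro G hE
    refine ⟨∅, by simpa using Phi_nonneg G, ?_⟩
    exact k4_no_edges (fun x y hxy => hE x y hxy.1)
  intro n
  induction n with
  | zero =>
    intro G hG
    refine hnoedge G (fun x y hxy => ?_)
    have h1 : 1 ≤ mydeg G x := (Set.ncard_pos (Set.toFinite _)).2 ⟨y, hxy⟩
    have h2 : mydeg G x ≤ degsum G :=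
      Finset.single_le_sum (fun w _ => Nat.zero_le _) (Finset.mem_univ x)
    omega
  | succ n ih =>
    intro G hG
    by_cases hE : ∀ x y, ¬ G.Adj x y
    · exact hnoedge G hE
    push_neg at hE
    obtain ⟨x0, y0, hadj0⟩ := hE
    by_cases hsm : ∃ v, 1 ≤ mydeg G v ∧ mydeg G v ≤ 2
    · obtain ⟨v, hd1, hd2⟩ := hsm
      have hcases : mydeg G v = 1 ∨ mydeg G v = 2 := by omega
      rcases hcases with h1 | h2
      · -- degree 1
        obtain ⟨a, ha⟩ := Set.ncard_eq_one.1 h1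
        have hva : G.Adj v a := by
          have : a ∈ G.neighborSet v := by rw [ha]; exact rfl
          exact this
        set G' := Del ({v} : Set V) G with hG'
        have hdegle : ∀ w, mydeg G' w ≤ mydeg G w := del_deg_le _ _
        have hlt : degsum G' < degsum G := by
          refine degsum_lt hdegle v ?_
          rw [del_deg_mem _ _ _ (Set.mem_singleton v)]; omega
        obtain ⟨X, hX1, hX2⟩ := ih G' (by omega)
        refine ⟨X, le_trans hX1 (Phi_mono hdegle), fun hk4 => hX2 ?_⟩
        refine transfer (Del (↑X) G) (Del (↑X) G') v a a ?_ ?_ ?_ hk4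
        · rintro w ⟨hadj, -, -⟩
          left
          have : w ∈ G.neighborSet v := hadj
          rw [ha] at this; exact this
        · rintro x y ⟨hadj, hx, hy⟩ hxv hyv
          exact ⟨⟨hadj, hxv, hyv⟩, hx, hy⟩
        · rintro x y ⟨hadjx, -, -⟩ ⟨hadjy, -, -⟩ hxy
          exfalso
          have hx : x ∈ G.neighborSet v := hadjx
          have hy : y ∈ G.neighborSet v := hadjy
          rw [ha] at hx hy
          exact hxy (hx.trans hy.symm)
      · -- degree 2
        obtain ⟨a, b, hne, hN⟩ := Set.ncard_eq_two.1 h2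
        have hva : G.Adj v a := by
          have : a ∈ G.neighborSet v := by rw [hN]; exact Set.mem_insert a {b}
          exact this
        have hvb : G.Adj v b := by
          have : b ∈ G.neighborSet v := by rw [hN]; exact Set.mem_insert_of_mem a rfl
          exact this
        set G' := Suppress G v a b with hG'
        have hdegle : ∀ w, mydeg G' w ≤ mydeg G w := sup_deg_le hva hvb
        have hlt : degsum G' < degsum G := by
          refine degsum_lt hdegle v ?_
          rw [hG', sup_deg_v hva hvb]; omega
        obtain ⟨X, hX1, hX2⟩ := ih G' (by omega)
        refine ⟨X, le_trans hX1 (Phi_mono hdegle), fun hk4 => hX2 ?_⟩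
        refine transfer (Del (↑X) G) (Del (↑X) G') v a b ?_ ?_ ?_ hk4
        · rintro w ⟨hadj, -, -⟩
          have : w ∈ G.neighborSet v := hadj
          rw [hN] at this
          simpa using this
        · rintro x y ⟨hadj, hx, hy⟩ hxv hyv
          exact ⟨Or.inl ⟨hadj, hxv, hyv⟩, hx, hy⟩
        · rintro x y ⟨hadjx, -, hxX⟩ ⟨hadjy, -, hyX⟩ hxy
          have hx : x ∈ G.neighborSet v := hadjx
          have hy : y ∈ G.neighborSet v := hadjy
          rw [hN] at hx hy
          simp only [Set.mem_insert_iff, Set.mem_singleton_iff] at hx hy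
          have hor : (x = a ∧ y = b) ∨ (x = b ∧ y = a) := by
            rcases hx with rfl | rfl <;> rcases hy with rfl | rfl
            · exact absurd rfl hxy
            · exact Or.inl ⟨rfl, rfl⟩
            · exact Or.inr ⟨rfl, rfl⟩
            · exact absurd rfl hxy
          exact ⟨Or.inr ⟨hor, hne⟩, hxX, hyX⟩
    · -- all degrees are 0 or ≥ 3
      push_neg at hsm
      have hbig : ∀ w, 1 ≤ mydeg G w → 3 ≤ mydeg G w := by
        intro w h1
        by_contra h3
        have := hsm w h1
        omega
      obtain ⟨v, -, hmax'⟩ :=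
        Finset.exists_max_image Finset.univ (mydeg G) ⟨x0, Finset.mem_univ x0⟩
      have hmax : ∀ w, mydeg G w ≤ mydeg G v := fun w => hmax' w (Finset.mem_univ w)
      have hv3 : 3 ≤ mydeg G v := by
        have h1 : 1 ≤ mydeg G x0 := (Set.ncard_pos (Set.toFinite _)).2 ⟨y0, hadj0⟩
        exact le_trans (hbig x0 h1) (hmax x0)
      have hnb3 : ∀ w, G.Adj v w → 3 ≤ mydeg G w := by
        intro w hadj
        exact hbig w ((Set.ncard_pos (Set.toFinite _)).2 ⟨v, hadj.symm⟩)
      set G' := Del ({v} : Set V) G with hG'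
      have hlt : degsum G' < degsum G := by
        refine degsum_lt (del_deg_le _ _) v ?_
        rw [del_deg_mem _ _ _ (Set.mem_singleton v)]; omega
      obtain ⟨X', hX1, hX2⟩ := ih G' (by omega)
      refine ⟨insert v X', ?_, ?_⟩
      · have hcard : ((insert v X').card : ℝ) ≤ (X'.card : ℝ) + 1 := by
          exact_mod_cast Finset.card_insert_le v X'
        have := Phi_drop hv3 hmax hnb3
        rw [← hG'] at this
        linarith
      · intro hk4
        apply hX2
        refine k4_mono ?_ hk4
        rintro x y ⟨hadj, hx, hy⟩
        simp only [Finset.coe_insert, Set.mem_insert_iff, not_or] at hx hy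
        exact ⟨⟨hadj, by simpa using hx.1, by simpa using hy.1⟩,
          by simpa using hx.2, by simpa using hy.2⟩

/-- A `K₄` minor of the induced subgraph on `Xᶜ` gives a `K₄` minor of the spanning
subgraph obtained by deleting all edges incident to `X`. -/
lemma bridge (G : SimpleGraph V) (X : Finset V) :
    HasK4Minor (G.induce ((↑X : Set V)ᶜ)) → HasK4Minor (Del (↑X : Set V) G) := by
  rintro ⟨B, hne, hconn, hdis, hcross⟩
  refine ⟨fun i => Subtype.val '' B i, fun i => (hne i).image _, fun i => ?_,
    fun i j hij => Set.disjoint_image_of_injective Subtype.val_injective (hdis i j hij),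
    fun i j hij => ?_⟩
  · -- connectivity via surjective hom
    let f : ((G.induce ((↑X : Set V)ᶜ)).induce (B i)) →g
        ((Del (↑X : Set V) G).induce (Subtype.val '' B i)) :=
      ⟨fun u => ⟨u.1.1, ⟨u.1, u.2, rfl⟩⟩, fun {u w} hadj => ⟨hadj, u.1.2, w.1.2⟩⟩
    apply Connected.map f ?_ (hconn i)
    rintro ⟨x, ⟨u, hu, rfl⟩⟩
    exact ⟨⟨u, hu⟩, Subtype.ext rfl⟩
  · obtain ⟨u, hu, w, hw, hadj⟩ := hcross i j hij
    exact ⟨u.1, ⟨u, hu, rfl⟩, w.1, ⟨w, hw, rfl⟩, hadj, u.2, w.2⟩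

lemma degsum_eq [Fintype V] (G : SimpleGraph V) : degsum G = 2 * G.edgeSet.ncard := by
  classical
  have h1 : ∀ w, mydeg G w = G.degree w := by
    intro w
    rw [mydeg, degree, neighborFinset_def, Set.ncard_eq_toFinset_card']
  rw [degsum, Finset.sum_congr rfl (fun w _ => h1 w), sum_degrees_eq_twice_card_edges]
  congr 1
  rw [Set.ncard_eq_toFinset_card', Set.toFinset_card, ← edgeFinset_card]

end Aux

theorem statement0 {V : Type*} [Fintype V] (G : SimpleGraph V) :
    (transNum G : ℝ) ≤ (G.edgeSet.ncard : ℝ) / 5 := by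
  classical
  obtain ⟨X, hX1, hX2⟩ := main (degsum G) G le_rfl
  have htr : IsTransversal G X := fun h => hX2 (bridge G X h)
  have h1 : transNum G ≤ X.card := Nat.sInf_le ⟨X, rfl, htr⟩
  have h2 : Phi G ≤ (degsum G : ℝ) / 10 := by
    rw [Phi]
    calc ∑ w, fpot (mydeg G w) ≤ ∑ w, (mydeg G w : ℝ) / 10 :=
          Finset.sum_le_sum (fun w _ => fpot_le _)
      _ = (degsum G : ℝ) / 10 := by
          rw [degsum]; push_cast; rw [← Finset.sum_div]
  have h3 : (degsum G : ℝ) = 2 * (G.edgeSet.ncard : ℝ) := by exact_mod_cast degsum_eq G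
  have h4 : (transNum G : ℝ) ≤ (X.card : ℝ) := Nat.cast_le.2 h1
  linarith
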